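/- For a symmetric positive definite 2×2 real matrix H, the complex Beltrami coefficient μ = (H₁₁ - H₂₂ + 2i·H₁₂)/(H₁₁ + H₂₂ + 2√(det H)) satisfies |μ|² ≤ 1 - 4·det H/(tr H)². -/

import Mathlib

open Matrix

/-- For a symmetric positive definite 2×2 real matrix `H`, the Beltrami coefficient
`μ = (H₁₁ - H₂₂ + 2i H₁₂)/(H₁₁ + H₂₂ + 2√(det H))` satisfies
`|μ|² ≤ 1 - 4 det H / (tr H)²`. -/
theorem stmt0 (H : Matrix (Fin 2) (Fin 2) ℝ) (hsymm : H.IsSymm) (hpos : H.PosDef)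
    (μ : ℂ)
    (hμ : μ = (((H 0 0 - H 1 1 : ℝ) : ℂ) + 2 * Complex.I * ((H 0 1 : ℝ) : ℂ)) /
      (((H 0 0 + H 1 1 + 2 * Real.sqrt H.det : ℝ) : ℂ))) :
    ‖μ‖ ^ 2 ≤ 1 - 4 * H.det / H.trace ^ 2 := by
  set a := H 0 0 with ha
  set b := H 1 1 with hb
  set c := H 0 1 with hc
  have hc' : H 1 0 = c := hsymm.apply 0 1
  have hdet : H.det = a * b - c * c := by
    rw [Matrix.det_fin_two, hc']
  have htr : H.trace = a + b := by
    rw [Matrix.trace_fin_two]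
  have ha0 : 0 < a := by
    have := hpos.dotProduct_mulVec_pos (x := Pi.single 0 1) (Function.ne_iff.mpr ⟨0, by simp⟩)
    simpa [Matrix.mulVec, dotProduct, Fin.sum_univ_two] using this
  have hb0 : 0 < b := by
    have := hpos.dotProduct_mulVec_pos (x := Pi.single 1 1) (Function.ne_iff.mpr ⟨1, by simp⟩)
    simpa [Matrix.mulVec, dotProduct, Fin.sum_univ_two] using this
  have hd0 : 0 < a * b - c * c := hdet ▸ hpos.det_pos
  set s := Real.sqrt H.det with hs
  have hs0 : 0 ≤ s := Real.sqrt_nonneg _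
  have hs2 : s ^ 2 = a * b - c * c := by
    rw [hs, Real.sq_sqrt hpos.det_pos.le, hdet]
  have ht0 : 0 < a + b := by linarith
  have hD0 : 0 < a + b + 2 * s := by linarith
  have key : ‖μ‖ ^ 2 = ((a - b) ^ 2 + 4 * c ^ 2) / (a + b + 2 * s) ^ 2 := by
    rw [hμ, norm_div, div_pow, Complex.sq_norm, Complex.sq_norm, Complex.normSq_apply,
      Complex.normSq_apply]
    simp only [Complex.add_re, Complex.add_im, Complex.ofReal_re, Complex.ofReal_im,
      Complex.mul_re, Complex.mul_im, Complex.I_re, Complex.I_im, Complex.re_ofNat,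
      Complex.im_ofNat]
    ring_nf
  rw [key, htr, hdet]
  have hN0 : 0 ≤ (a - b) ^ 2 + 4 * c ^ 2 := by positivity
  have hNeq : (a - b) ^ 2 + 4 * c ^ 2 = (a + b) ^ 2 - 4 * (a * b - c * c) := by ring
  have hrhs : 1 - 4 * (a * b - c * c) / (a + b) ^ 2
      = ((a - b) ^ 2 + 4 * c ^ 2) / (a + b) ^ 2 := by
    field_simp
    ring
  rw [hrhs]
  apply div_le_div_of_nonneg_left hN0 (by positivity)
  nlinarith [sq_nonneg s, mul_nonneg hs0 ht0.le]
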